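/- Let Ω ⊆ ℝ^4 be open and let u, v, w : Ω → ℝ be smooth. On Ω × (ℝ \ {0}) (with coordinates x^1, x^2, x^3, x^4, λ) define the vector fields Y₁ = λ∂₁ − u₁∂₃ − v₁∂₄ + λw₁∂_λ and Y₂ = λ∂₂ − u₂∂₃ − v₂∂₄ + λw₂∂_λ. Then the bracket [Y₁, Y₂](x, λ) lies in the linear span of {Y₁(x, λ), Y₂(x, λ)} for every x ∈ Ω and every λ ≠ 0 if and only if R₁(u) = u₁w₂ − u₂w₁, R₁(v) = v₁w₂ − v₂w₁ and R₁(w) = 0 hold on Ω, where R₁ = u₁∂₂∂₃ + v₁∂₂∂₄ − u₂∂₁∂₃ − v₂∂₁∂₄. -/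

import Mathlib

/-- The `i`-th standard coordinate (basis) vector of `ℝᵐ`. -/
noncomputable def e (m : ℕ) (i : Fin m) : Fin m → ℝ := Pi.single i 1

/-- Partial derivative `∂f/∂xⁱ` of a scalar function on `ℝᵐ`. -/
noncomputable def pd (m : ℕ) (f : (Fin m → ℝ) → ℝ) (i : Fin m) (x : Fin m → ℝ) : ℝ :=
  fderiv ℝ f x (e m i)

/-- Second partial derivative `∂²f/∂xⁱ∂xʲ`. -/
noncomputable def pd2 (m : ℕ) (f : (Fin m → ℝ) → ℝ) (i j : Fin m) (x : Fin m → ℝ) : ℝ :=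
  pd m (fun y => pd m f i y) j x

/-- Lie bracket of vector fields on (an open subset of) `ℝᵐ`:
`[X,Y](x) = DY(x)·X(x) − DX(x)·Y(x)`. -/
noncomputable def vbr (m : ℕ) (X Y : (Fin m → ℝ) → (Fin m → ℝ)) (x : Fin m → ℝ) :
    Fin m → ℝ :=
  fderiv ℝ Y x (X x) - fderiv ℝ X x (Y x)

/-- Projection from `ℝ⁵ = Ω × (ℝ∖{0})` (coordinates `x¹,…,x⁴,λ`) to `ℝ⁴`. -/
noncomputable def proj45 (z : Fin 5 → ℝ) : Fin 4 → ℝ := fun i => z i.castSucc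

/-- `Y₁ = λ∂₁ − u₁∂₃ − v₁∂₄ + λw₁∂_λ` (coordinates `x¹,…,x⁴` indexed by
`0,…,3`, `λ` by `4`). -/
noncomputable def YF1 (u v w : (Fin 4 → ℝ) → ℝ) (z : Fin 5 → ℝ) : Fin 5 → ℝ :=
  z 4 • e 5 0 - pd 4 u 0 (proj45 z) • e 5 2 - pd 4 v 0 (proj45 z) • e 5 3
  + (z 4 * pd 4 w 0 (proj45 z)) • e 5 4

/-- `Y₂ = λ∂₂ − u₂∂₃ − v₂∂₄ + λw₂∂_λ`. -/
noncomputable def YF2 (u v w : (Fin 4 → ℝ) → ℝ) (z : Fin 5 → ℝ) : Fin 5 → ℝ :=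
  z 4 • e 5 1 - pd 4 u 1 (proj45 z) • e 5 2 - pd 4 v 1 (proj45 z) • e 5 3
  + (z 4 * pd 4 w 1 (proj45 z)) • e 5 4

/-- The operator `R₁ = u₁∂₂∂₃ + v₁∂₂∂₄ − u₂∂₁∂₃ − v₂∂₁∂₄`. -/
noncomputable def R1op (u v f : (Fin 4 → ℝ) → ℝ) (x : Fin 4 → ℝ) : ℝ :=
  pd 4 u 0 x * pd2 4 f 1 2 x + pd 4 v 0 x * pd2 4 f 1 3 x
  - pd 4 u 1 x * pd2 4 f 0 2 x - pd 4 v 1 x * pd2 4 f 0 3 x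

section AuxStmt10

variable {Ω : Set (Fin 4 → ℝ)} {f u v w : (Fin 4 → ℝ) → ℝ} {x : Fin 4 → ℝ}

theorem contDiffAt_pd (hΩ : IsOpen Ω) (hf : ContDiffOn ℝ (⊤:ℕ∞) f Ω) (hx : x ∈ Ω) (i : Fin 4) :
    ContDiffAt ℝ (⊤:ℕ∞) (pd 4 f i) x := by
  have hf' : ContDiffAt ℝ (⊤:ℕ∞) f x := hf.contDiffAt (hΩ.mem_nhds hx)
  have h1 : ContDiffAt ℝ (⊤:ℕ∞) (fderiv ℝ f) x := hf'.fderiv_right (by simp)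
  exact ((ContinuousLinearMap.apply ℝ ℝ (e 4 i)).contDiff.contDiffAt).comp x h1

/-- generic Y-field -/
noncomputable def YF (u v w : (Fin 4 → ℝ) → ℝ) (i : Fin 4) (b : Fin 5) (z : Fin 5 → ℝ) :
    Fin 5 → ℝ :=
  z 4 • e 5 b - pd 4 u i (proj45 z) • e 5 2 - pd 4 v i (proj45 z) • e 5 3
  + (z 4 * pd 4 w i (proj45 z)) • e 5 4

theorem YF1_eq : YF1 u v w = YF u v w 0 0 := rfl
theorem YF2_eq : YF2 u v w = YF u v w 1 1 := rfl

noncomputable def Lproj : (Fin 5 → ℝ) →L[ℝ] (Fin 4 → ℝ) :=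
  ContinuousLinearMap.pi (fun i : Fin 4 => ContinuousLinearMap.proj i.castSucc)

theorem Lproj_apply (z : Fin 5 → ℝ) : Lproj z = proj45 z := rfl

theorem fderiv_YF_apply (hΩ : IsOpen Ω) (hu : ContDiffOn ℝ (⊤:ℕ∞) u Ω)
    (hv : ContDiffOn ℝ (⊤:ℕ∞) v Ω) (hw : ContDiffOn ℝ (⊤:ℕ∞) w Ω)
    {z : Fin 5 → ℝ} (hz : proj45 z ∈ Ω) (i : Fin 4) (b : Fin 5) (Yv : Fin 5 → ℝ) :
    fderiv ℝ (YF u v w i b) z Yv =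
      Yv 4 • e 5 b - (fderiv ℝ (pd 4 u i) (proj45 z) (proj45 Yv)) • e 5 2
      - (fderiv ℝ (pd 4 v i) (proj45 z) (proj45 Yv)) • e 5 3
      + (z 4 * (fderiv ℝ (pd 4 w i) (proj45 z) (proj45 Yv)) + pd 4 w i (proj45 z) * Yv 4) • e 5 4 := by
  set x := proj45 z with hx
  have hL : HasFDerivAt proj45 Lproj z := Lproj.hasFDerivAt
  have h4 : HasFDerivAt (fun z : Fin 5 → ℝ => z 4)
      (ContinuousLinearMap.proj (R := ℝ) (φ := fun _ : Fin 5 => ℝ) 4) z := by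
    exact (ContinuousLinearMap.proj (R := ℝ) (φ := fun _ : Fin 5 => ℝ) 4).hasFDerivAt
  have hgu : HasFDerivAt (fun z => pd 4 u i (proj45 z)) ((fderiv ℝ (pd 4 u i) x).comp Lproj) z :=
    by have := (((contDiffAt_pd hΩ hu hz i).differentiableAt (by simp)).hasFDerivAt).comp z hL; exact this
  have hgv : HasFDerivAt (fun z => pd 4 v i (proj45 z)) ((fderiv ℝ (pd 4 v i) x).comp Lproj) z :=
    by have := (((contDiffAt_pd hΩ hv hz i).differentiableAt (by simp)).hasFDerivAt).comp z hL; exact this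
  have hgw : HasFDerivAt (fun z => pd 4 w i (proj45 z)) ((fderiv ℝ (pd 4 w i) x).comp Lproj) z :=
    by have := (((contDiffAt_pd hΩ hw hz i).differentiableAt (by simp)).hasFDerivAt).comp z hL; exact this
  have hY : HasFDerivAt (YF u v w i b)
      ((ContinuousLinearMap.proj (R := ℝ) (φ := fun _ : Fin 5 => ℝ) 4).smulRight (e 5 b)
        - ((fderiv ℝ (pd 4 u i) x).comp Lproj).smulRight (e 5 2)
        - ((fderiv ℝ (pd 4 v i) x).comp Lproj).smulRight (e 5 3)
        + (z 4 • ((fderiv ℝ (pd 4 w i) x).comp Lproj)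
            + pd 4 w i x • (ContinuousLinearMap.proj (R := ℝ) (φ := fun _ : Fin 5 => ℝ) 4)).smulRight (e 5 4)) z := by
    exact (((h4.smul_const (e 5 b)).sub (hgu.smul_const (e 5 2))).sub
      (hgv.smul_const (e 5 3))).add ((h4.mul hgw).smul_const (e 5 4))
  rw [hY.fderiv]
  simp [ContinuousLinearMap.smulRight_apply, Lproj_apply, smul_smul]

theorem fderiv_pd_apply (i j : Fin 4) (a b c : ℝ) :
    fderiv ℝ (pd 4 f i) x (a • e 4 j - b • e 4 2 - c • e 4 3) =
      a * pd2 4 f i j x - b * pd2 4 f i 2 x - c * pd2 4 f i 3 x := by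
  rw [map_sub, map_sub, map_smul, map_smul, map_smul]
  rfl

theorem proj45_YF (i : Fin 4) (j : Fin 4) (z : Fin 5 → ℝ) :
    proj45 (YF u v w i j.castSucc z) =
      z 4 • e 4 j - pd 4 u i (proj45 z) • e 4 2 - pd 4 v i (proj45 z) • e 4 3 := by
  funext k
  fin_cases k <;> fin_cases j <;>
    simp [proj45, YF, e, Pi.single_apply]

theorem pd2_symm (hΩ : IsOpen Ω) (hf : ContDiffOn ℝ (⊤:ℕ∞) f Ω) (hx : x ∈ Ω) (i j : Fin 4) :
    pd2 4 f i j x = pd2 4 f j i x := by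
  have hf' : ContDiffAt ℝ (⊤:ℕ∞) f x := hf.contDiffAt (hΩ.mem_nhds hx)
  have h1 : ContDiffAt ℝ (⊤:ℕ∞) (fderiv ℝ f) x := hf'.fderiv_right (by simp)
  have hdf : DifferentiableAt ℝ (fderiv ℝ f) x := h1.differentiableAt (by simp)
  have hsym : IsSymmSndFDerivAt ℝ f x := hf'.isSymmSndFDerivAt
    (by simp; exact WithTop.coe_le_coe.mpr (le_top (a := (2:ℕ∞))))
  have key : ∀ k l : Fin 4, pd2 4 f k l x = fderiv ℝ (fderiv ℝ f) x (e 4 l) (e 4 k) := by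
    intro k l
    have hA : HasFDerivAt (fun y => fderiv ℝ f y (e 4 k))
        ((ContinuousLinearMap.apply ℝ ℝ (e 4 k)).comp (fderiv ℝ (fderiv ℝ f) x)) x :=
      ((ContinuousLinearMap.apply ℝ ℝ (e 4 k)).hasFDerivAt).comp x hdf.hasFDerivAt
    show fderiv ℝ (fun y => fderiv ℝ f y (e 4 k)) x (e 4 l) = _
    rw [hA.fderiv]; rfl
  rw [key i j, key j i, hsym]

theorem proj45_YF0 (i : Fin 4) (z : Fin 5 → ℝ) :
    proj45 (YF u v w i 0 z) =
      z 4 • e 4 0 - pd 4 u i (proj45 z) • e 4 2 - pd 4 v i (proj45 z) • e 4 3 :=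
  proj45_YF i 0 z

theorem proj45_YF1' (i : Fin 4) (z : Fin 5 → ℝ) :
    proj45 (YF u v w i 1 z) =
      z 4 • e 4 1 - pd 4 u i (proj45 z) • e 4 2 - pd 4 v i (proj45 z) • e 4 3 :=
  proj45_YF i 1 z

theorem key_identity (hΩ : IsOpen Ω) (hu : ContDiffOn ℝ (⊤:ℕ∞) u Ω)
    (hv : ContDiffOn ℝ (⊤:ℕ∞) v Ω) (hw : ContDiffOn ℝ (⊤:ℕ∞) w Ω)
    {z : Fin 5 → ℝ} (hz : proj45 z ∈ Ω) :
    vbr 5 (YF1 u v w) (YF2 u v w) z =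
      (-(pd 4 w 1 (proj45 z))) • YF1 u v w z + (pd 4 w 0 (proj45 z)) • YF2 u v w z
      + (R1op u v u (proj45 z)
          - (pd 4 u 0 (proj45 z) * pd 4 w 1 (proj45 z)
             - pd 4 u 1 (proj45 z) * pd 4 w 0 (proj45 z))) • e 5 2
      + (R1op u v v (proj45 z)
          - (pd 4 v 0 (proj45 z) * pd 4 w 1 (proj45 z)
             - pd 4 v 1 (proj45 z) * pd 4 w 0 (proj45 z))) • e 5 3
      - (z 4 * R1op u v w (proj45 z)) • e 5 4 := by
  have hsu := pd2_symm hΩ hu hz 0 1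
  have hsv := pd2_symm hΩ hv hz 0 1
  have hsw := pd2_symm hΩ hw hz 0 1
  rw [vbr, YF1_eq, YF2_eq,
    fderiv_YF_apply hΩ hu hv hw hz 1 1 (YF u v w 0 0 z),
    fderiv_YF_apply hΩ hu hv hw hz 0 0 (YF u v w 1 1 z),
    proj45_YF0, proj45_YF1']
  have hY04 : YF u v w 0 0 z 4 = z 4 * pd 4 w 0 (proj45 z) := by
    simp [YF, e, Pi.single_apply, Fin.ext_iff, show ((4:Fin 5):ℕ) = 4 from rfl,
      show ((2:Fin 5):ℕ) = 2 from rfl, show ((3:Fin 5):ℕ) = 3 from rfl]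
  have hY14 : YF u v w 1 1 z 4 = z 4 * pd 4 w 1 (proj45 z) := by
    simp [YF, e, Pi.single_apply, Fin.ext_iff, show ((4:Fin 5):ℕ) = 4 from rfl,
      show ((2:Fin 5):ℕ) = 2 from rfl, show ((3:Fin 5):ℕ) = 3 from rfl]
  rw [hY04, hY14]
  simp only [fderiv_pd_apply, YF, R1op]
  rw [hsu, hsv, hsw]
  module

end AuxStmt10

/-- Construction 2 (4D): `[Y₁,Y₂](x,λ) ∈ span{Y₁(x,λ), Y₂(x,λ)}` for all `x ∈ Ω`,
`λ ≠ 0`, iff `R₁(u) = u₁w₂ − u₂w₁`, `R₁(v) = v₁w₂ − v₂w₁`, `R₁(w) = 0` on `Ω`. -/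
theorem stmt_10 (Ω : Set (Fin 4 → ℝ)) (hΩ : IsOpen Ω)
    (u v w : (Fin 4 → ℝ) → ℝ)
    (hu : ContDiffOn ℝ (⊤:ℕ∞) u Ω) (hv : ContDiffOn ℝ (⊤:ℕ∞) v Ω)
    (hw : ContDiffOn ℝ (⊤:ℕ∞) w Ω) :
    (∀ z : Fin 5 → ℝ, proj45 z ∈ Ω → z 4 ≠ 0 →
        vbr 5 (YF1 u v w) (YF2 u v w) z ∈
          Submodule.span ℝ ({YF1 u v w z, YF2 u v w z} : Set (Fin 5 → ℝ))) ↔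
      (∀ x ∈ Ω,
        R1op u v u x = pd 4 u 0 x * pd 4 w 1 x - pd 4 u 1 x * pd 4 w 0 x
        ∧ R1op u v v x = pd 4 v 0 x * pd 4 w 1 x - pd 4 v 1 x * pd 4 w 0 x
        ∧ R1op u v w x = 0) := by
  constructor
  · intro H x hx
    set z : Fin 5 → ℝ := Fin.snoc x 1 with hzdef
    have hz4 : z 4 = 1 := by
      rw [hzdef]
      rw [show (4:Fin 5) = Fin.last 4 from rfl]
      simp [Fin.snoc]
    have hproj : proj45 z = x := by
      funext i; simp [proj45, hzdef, Fin.snoc_castSucc]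
    have hmem := H z (by rw [hproj]; exact hx) (by rw [hz4]; norm_num)
    rw [key_identity hΩ hu hv hw (by rw [hproj]; exact hx)] at hmem
    rw [hproj, hz4] at hmem
    obtain ⟨a, b, hab⟩ := Submodule.mem_span_pair.mp hmem
    have hY1v : ∀ k : Fin 5, YF1 u v w z k =
        ((1:ℝ) • e 5 0 - pd 4 u 0 x • e 5 2 - pd 4 v 0 x • e 5 3 + (1 * pd 4 w 0 x) • e 5 4) k := by
      intro k; rw [YF1, hproj, hz4]
    have hY2v : ∀ k : Fin 5, YF2 u v w z k =
        ((1:ℝ) • e 5 1 - pd 4 u 1 x • e 5 2 - pd 4 v 1 x • e 5 3 + (1 * pd 4 w 1 x) • e 5 4) k := by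
      intro k; rw [YF2, hproj, hz4]
    have h0 := congrFun hab 0
    have h1 := congrFun hab 1
    have h2 := congrFun hab 2
    have h3 := congrFun hab 3
    have h4 := congrFun hab 4
    simp only [Pi.add_apply, Pi.sub_apply, Pi.smul_apply, Pi.neg_apply, smul_eq_mul,
      hY1v, hY2v] at h0 h1 h2 h3 h4
    simp only [e, Pi.single_apply, Fin.ext_iff, show ((0:Fin 5):ℕ) = 0 from rfl,
      show ((1:Fin 5):ℕ) = 1 from rfl, show ((2:Fin 5):ℕ) = 2 from rfl,
      show ((3:Fin 5):ℕ) = 3 from rfl, show ((4:Fin 5):ℕ) = 4 from rfl] at h0 h1 h2 h3 h4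
    norm_num at h0 h1 h2 h3 h4
    refine ⟨by linear_combination -h2 - pd 4 u 0 x * h0 - pd 4 u 1 x * h1,
      by linear_combination -h3 - pd 4 v 0 x * h0 - pd 4 v 1 x * h1,
      by linear_combination h4 - pd 4 w 0 x * h0 - pd 4 w 1 x * h1⟩
  · intro H z hz hlam
    rw [key_identity hΩ hu hv hw hz]
    obtain ⟨e1, e2, e3⟩ := H _ hz
    rw [e1, e2, e3]
    simp only [sub_self, zero_smul, add_zero, mul_zero, sub_zero]
    exact Submodule.mem_span_pair.mpr ⟨-(pd 4 w 1 (proj45 z)), pd 4 w 0 (proj45 z), rfl⟩
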